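/- arXiv:2002.00486 — 4 statements merged into one kernel-verified Lean document; each statement's English description precedes it below -/
import Mathlib

section
/- Let S ⊂ P^n(ℝ) be a connected semi-algebraic set and ℓ a real linear form on ℝ^{n+1} whose zero hyperplane does not meet S. Then the projective convex hull of S (defined by dehomogenizing at any hyperplane missing S) equals P(cone{x ∈ Ŝ : ℓ(x) > 0}), where Ŝ is the affine cone over S. In particular, the convex hull does not depend on the choice of such a linear form ℓ. -/
open Set Pointwise

/-- Semialgebraic subsets of `ℝ^σ`: finite boolean combinations of sets
`{x | 0 < p(x)}` for polynomials `p`. -/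
inductive IsSemialgebraic {σ : Type*} : Set (σ → ℝ) → Prop
  | basic (f : MvPolynomial σ ℝ) : IsSemialgebraic {x | 0 < MvPolynomial.eval x f}
  | compl {s : Set (σ → ℝ)} : IsSemialgebraic s → IsSemialgebraic sᶜ
  | union {s t : Set (σ → ℝ)} : IsSemialgebraic s → IsSemialgebraic t →
      IsSemialgebraic (s ∪ t)

/-- The Euclidean (quotient) topology on real projective space. -/
noncomputable def projEuclTop (n : ℕ) : TopologicalSpace (Projectivization ℝ (Fin (n + 1) → ℝ)) :=
  TopologicalSpace.coinduced
    (fun v : {w : Fin (n + 1) → ℝ // w ≠ 0} => Projectivization.mk ℝ v.1 v.2) inferInstance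

/-- The affine cone (minus the origin) over a subset of projective space. -/
def coneOver {n : ℕ} (S : Set (Projectivization ℝ (Fin (n + 1) → ℝ))) :
    Set (Fin (n + 1) → ℝ) :=
  {v | ∃ h : v ≠ 0, Projectivization.mk ℝ v h ∈ S}

/-- The projective convex hull of `S` formed by dehomogenizing at the affine chart
`{m = 1}` of the hyperplane `{m = 0}`, taking the convex hull there, and mapping back. -/
def convVia {n : ℕ} (m : (Fin (n + 1) → ℝ) →ₗ[ℝ] ℝ)
    (S : Set (Projectivization ℝ (Fin (n + 1) → ℝ))) :
    Set (Projectivization ℝ (Fin (n + 1) → ℝ)) :=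
  {x | ∃ v ∈ convexHull ℝ {w ∈ coneOver S | m w = 1}, ∃ h : v ≠ 0,
    x = Projectivization.mk ℝ v h}

/-- `ℙ(cone A)`: the image in projective space of the convex cone generated by `A`. -/
def projCone {n : ℕ} (A : Set (Fin (n + 1) → ℝ)) :
    Set (Projectivization ℝ (Fin (n + 1) → ℝ)) :=
  {x | ∃ v, (∃ c : ℝ, 0 ≤ c ∧ ∃ y ∈ convexHull ℝ A, v = c • y) ∧
    ∃ h : v ≠ 0, x = Projectivization.mk ℝ v h}

section Stmt0Aux

open Projectivization

private lemma stmt0_mk_smul_eq {n : ℕ} {c : ℝ} (hc : c ≠ 0) (v : Fin (n + 1) → ℝ)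
    (hv : v ≠ 0) (hcv : c • v ≠ 0) :
    Projectivization.mk ℝ (c • v) hcv = Projectivization.mk ℝ v hv :=
  (Projectivization.mk_eq_mk_iff' ℝ _ _ _ _).2 ⟨c, rfl⟩

private lemma stmt0_coneOver_smul {n : ℕ} {S : Set (Projectivization ℝ (Fin (n + 1) → ℝ))}
    {v : Fin (n + 1) → ℝ} (hv : v ∈ coneOver S) {c : ℝ} (hc : c ≠ 0) :
    c • v ∈ coneOver S := by
  obtain ⟨h, hS⟩ := hv
  refine ⟨smul_ne_zero hc h, ?_⟩
  rwa [stmt0_mk_smul_eq hc v h]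

end Stmt0Aux

/-- Let `S ⊂ ℙⁿ(ℝ)` be a connected semialgebraic set and `ℓ` a real linear form
whose zero hyperplane does not meet `S`.  Then for every hyperplane `{m = 0}` missing `S`,
the projective convex hull of `S` defined by dehomogenizing at `{m = 0}` equals
`ℙ(cone {x ∈ Ŝ : ℓ(x) > 0})`; in particular the convex hull does not depend on the choice
of such a hyperplane, nor of the linear form `ℓ`. -/
theorem stmt0 (n : ℕ) (S : Set (Projectivization ℝ (Fin (n + 1) → ℝ)))
    (hsa : IsSemialgebraic (coneOver S))
    (hconn : @IsConnected _ (projEuclTop n) S)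
    (ℓ : (Fin (n + 1) → ℝ) →ₗ[ℝ] ℝ)
    (hℓ : ∀ v ∈ coneOver S, ℓ v ≠ 0) :
    ∀ m : (Fin (n + 1) → ℝ) →ₗ[ℝ] ℝ, (∀ v ∈ coneOver S, m v ≠ 0) →
      convVia m S = projCone {v ∈ coneOver S | 0 < ℓ v} := by
  intro m hm
  -- Step 1: the sign of `ℓ v * m v` is constant on the cone over `S`.
  have dich : (∀ v ∈ coneOver S, 0 < ℓ v * m v) ∨ (∀ v ∈ coneOver S, ℓ v * m v < 0) := by
    letI := projEuclTop n
    set f : {w : Fin (n + 1) → ℝ // w ≠ 0} → Projectivization ℝ (Fin (n + 1) → ℝ) :=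
      fun v => Projectivization.mk ℝ v.1 v.2 with hf
    have hcont : Continuous fun v : {w : Fin (n + 1) → ℝ // w ≠ 0} => ℓ v.1 * m v.1 :=
      (ℓ.continuous_of_finiteDimensional.comp continuous_subtype_val).mul
        (m.continuous_of_finiteDimensional.comp continuous_subtype_val)
    set U : Set (Projectivization ℝ (Fin (n + 1) → ℝ)) :=
      {x | ∃ v, ∃ h : v ≠ 0, x = Projectivization.mk ℝ v h ∧ 0 < ℓ v * m v} with hU
    set V : Set (Projectivization ℝ (Fin (n + 1) → ℝ)) :=
      {x | ∃ v, ∃ h : v ≠ 0, x = Projectivization.mk ℝ v h ∧ ℓ v * m v < 0} with hV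
    have key : ∀ (v w : Fin (n + 1) → ℝ) (hv : v ≠ 0) (hw : w ≠ 0),
        Projectivization.mk ℝ v hv = Projectivization.mk ℝ w hw →
        0 < ℓ w * m w → 0 < ℓ v * m v := by
      intro v w hv hw hmk hpos
      obtain ⟨a, rfl⟩ := (Projectivization.mk_eq_mk_iff' ℝ v w hv hw).1 hmk
      have ha : a ≠ 0 := by rintro rfl; simp at hv
      have h2 : 0 < a * a := mul_self_pos.mpr ha
      have : ℓ (a • w) * m (a • w) = (a * a) * (ℓ w * m w) := by
        simp [map_smul]; ring
      rw [this]; exact mul_pos h2 hpos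
    have key' : ∀ (v w : Fin (n + 1) → ℝ) (hv : v ≠ 0) (hw : w ≠ 0),
        Projectivization.mk ℝ v hv = Projectivization.mk ℝ w hw →
        ℓ w * m w < 0 → ℓ v * m v < 0 := by
      intro v w hv hw hmk hneg
      obtain ⟨a, rfl⟩ := (Projectivization.mk_eq_mk_iff' ℝ v w hv hw).1 hmk
      have ha : a ≠ 0 := by rintro rfl; simp at hv
      have h2 : 0 < a * a := mul_self_pos.mpr ha
      have : ℓ (a • w) * m (a • w) = (a * a) * (ℓ w * m w) := by
        simp [map_smul]; ring
      rw [this]; exact mul_neg_of_pos_of_neg h2 hneg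
    have memU : ∀ (v : Fin (n + 1) → ℝ) (h : v ≠ 0),
        Projectivization.mk ℝ v h ∈ U ↔ 0 < ℓ v * m v := by
      intro v h
      constructor
      · rintro ⟨w, hw, hmk, hpos⟩
        exact key v w h hw hmk hpos
      · intro hpos; exact ⟨v, h, rfl, hpos⟩
    have memV : ∀ (v : Fin (n + 1) → ℝ) (h : v ≠ 0),
        Projectivization.mk ℝ v h ∈ V ↔ ℓ v * m v < 0 := by
      intro v h
      constructor
      · rintro ⟨w, hw, hmk, hneg⟩
        exact key' v w h hw hmk hneg
      · intro hneg; exact ⟨v, h, rfl, hneg⟩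
    have hUopen : IsOpen U := by
      have hpre : f ⁻¹' U = {v | 0 < ℓ v.1 * m v.1} := by
        ext v; exact memU v.1 v.2
      have : IsOpen (f ⁻¹' U) := by
        rw [hpre]; exact isOpen_lt continuous_const hcont
      exact this
    have hVopen : IsOpen V := by
      have hpre : f ⁻¹' V = {v | ℓ v.1 * m v.1 < 0} := by
        ext v; exact memV v.1 v.2
      have : IsOpen (f ⁻¹' V) := by
        rw [hpre]; exact isOpen_lt hcont continuous_const
      exact this
    have hdisj : Disjoint U V := by
      rw [Set.disjoint_left]
      rintro x ⟨v, hv, rfl, hpos⟩ hxV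
      have := (memV v hv).1 hxV
      linarith
    have hcover : S ⊆ U ∪ V := by
      intro x hx
      have hv : x.rep ∈ coneOver S := ⟨x.rep_nonzero, by rw [Projectivization.mk_rep]; exact hx⟩
      have h1 := hℓ _ hv
      have h2 := hm _ hv
      have hne : ℓ x.rep * m x.rep ≠ 0 := mul_ne_zero h1 h2
      rcases hne.lt_or_gt with h | h
      · right
        rw [← x.mk_rep]
        exact (memV _ x.rep_nonzero).2 h
      · left
        rw [← x.mk_rep]
        exact (memU _ x.rep_nonzero).2 h
    rcases hconn.isPreconnected.subset_or_subset hUopen hVopen hdisj hcover with h | h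
    · left
      rintro v ⟨hv, hvS⟩
      exact (memU v hv).1 (h hvS)
    · right
      rintro v ⟨hv, hvS⟩
      exact (memV v hv).1 (h hvS)
  -- Step 2: extract a sign ε with the two key facts.
  set A : Set (Fin (n + 1) → ℝ) := {w ∈ coneOver S | m w = 1} with hA
  set B : Set (Fin (n + 1) → ℝ) := {v ∈ coneOver S | 0 < ℓ v} with hB
  obtain ⟨ε, hεne, fact1, fact2⟩ :
      ∃ ε : ℝ, ε ≠ 0 ∧ (∀ w ∈ A, ε • w ∈ B) ∧
        (∀ v ∈ B, ∃ t : ℝ, 0 < t ∧ ∃ w ∈ A, v = (ε * t) • w) := by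
    rcases dich with hpos | hneg
    · refine ⟨1, one_ne_zero, ?_, ?_⟩
      · rintro w ⟨hwC, hw1⟩
        have := hpos w hwC
        rw [hw1, mul_one] at this
        exact ⟨by rwa [one_smul], by rwa [one_smul]⟩
      · rintro v ⟨hvC, hvℓ⟩
        have hmv : 0 < m v := by nlinarith [hpos v hvC]
        refine ⟨m v, hmv, (m v)⁻¹ • v, ⟨stmt0_coneOver_smul hvC (inv_ne_zero hmv.ne'), ?_⟩, ?_⟩
        · simp [map_smul, inv_mul_cancel₀ hmv.ne']
        · rw [one_mul, smul_smul, mul_inv_cancel₀ hmv.ne', one_smul]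
    · refine ⟨-1, by norm_num, ?_, ?_⟩
      · rintro w ⟨hwC, hw1⟩
        have := hneg w hwC
        rw [hw1, mul_one] at this
        refine ⟨stmt0_coneOver_smul hwC (by norm_num), ?_⟩
        simp only [map_smul, smul_eq_mul]
        linarith
      · rintro v ⟨hvC, hvℓ⟩
        have hmv : m v < 0 := by nlinarith [hneg v hvC]
        refine ⟨-m v, by linarith, (m v)⁻¹ • v, ⟨stmt0_coneOver_smul hvC (inv_ne_zero hmv.ne), ?_⟩, ?_⟩
        · simp [map_smul, inv_mul_cancel₀ hmv.ne]
        · rw [show (-1 : ℝ) * -m v = m v by ring, smul_smul, mul_inv_cancel₀ hmv.ne, one_smul]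
  -- Step 3: the hull of B is the positive ε-cone over the hull of A.
  set D : Set (Fin (n + 1) → ℝ) :=
    {v | ∃ t : ℝ, 0 < t ∧ ∃ w ∈ convexHull ℝ A, v = (ε * t) • w} with hD
  have hDconvex : Convex ℝ D := by
    rintro x ⟨t₁, ht₁, w₁, hw₁, rfl⟩ y ⟨t₂, ht₂, w₂, hw₂, rfl⟩ a b ha hb hab
    have ht : 0 < a * t₁ + b * t₂ := by
      rcases eq_or_lt_of_le ha with h | h
      · have hb1 : b = 1 := by linarith
        rw [← h, hb1]; simpa using ht₂
      · have : 0 ≤ b * t₂ := mul_nonneg hb ht₂.le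
        nlinarith
    refine ⟨a * t₁ + b * t₂, ht,
      (a * t₁ / (a * t₁ + b * t₂)) • w₁ + (b * t₂ / (a * t₁ + b * t₂)) • w₂, ?_, ?_⟩
    · refine (convex_convexHull ℝ A) hw₁ hw₂
        (div_nonneg (mul_nonneg ha ht₁.le) ht.le)
        (div_nonneg (mul_nonneg hb ht₂.le) ht.le) ?_
      field_simp
    · rw [smul_add, smul_smul, smul_smul, smul_smul, smul_smul]
      congr 1
      · congr 1; field_simp
      · congr 1; field_simp
  have hBD : convexHull ℝ B ⊆ D := by
    refine convexHull_min ?_ hDconvex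
    intro v hv
    obtain ⟨t, ht, w, hwA, rfl⟩ := fact2 v hv
    exact ⟨t, ht, w, subset_convexHull ℝ A hwA, rfl⟩
  -- Step 4: conclude.
  ext x
  simp only [convVia, projCone, Set.mem_setOf_eq]
  constructor
  · rintro ⟨v, hv, hvne, rfl⟩
    have hεv : ε • v ∈ convexHull ℝ B := by
      have h1 : ε • v ∈ ε • convexHull ℝ A := Set.smul_mem_smul_set hv
      rw [← convexHull_smul] at h1
      exact convexHull_mono (by rintro _ ⟨w, hwA, rfl⟩; exact fact1 w hwA) h1
    have hεvne : ε • v ≠ 0 := smul_ne_zero hεne hvne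
    exact ⟨ε • v, ⟨1, zero_le_one, ε • v, hεv, (one_smul ℝ _).symm⟩, hεvne,
      (stmt0_mk_smul_eq hεne v hvne hεvne).symm⟩
  · rintro ⟨v, ⟨c, hc0, y, hy, rfl⟩, hvne, rfl⟩
    have hcne : c ≠ 0 := by rintro rfl; simp at hvne
    have hyne : y ≠ 0 := by rintro rfl; simp at hvne
    obtain ⟨t, ht, w, hwA, rfl⟩ := hBD hy
    have hwne : w ≠ 0 := by rintro rfl; simp at hyne
    refine ⟨w, hwA, hwne, ?_⟩
    refine (Projectivization.mk_eq_mk_iff' ℝ _ _ _ _).2 ⟨c * (ε * t), ?_⟩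
    rw [smul_smul]
end

section
/- Let Y ⊂ P^n be an irreducible projective variety with center cent(Y), and let H ⊂ P^n be a hyperplane with cent(Y) ⊄ H. Then the center of Y ∩ H equals cent(Y) ∩ H. -/
/-- The Zariski topology on the projectivization of `σ → K`. -/
def projZariski (K : Type*) [Field K] (σ : Type*) :
    TopologicalSpace (Projectivization K (σ → K)) :=
  TopologicalSpace.generateFrom
    {U | ∃ f : MvPolynomial σ K, (∃ d, f.IsHomogeneous d) ∧
      U = {x | MvPolynomial.eval x.rep f ≠ 0}}

/-- The projective line spanned by two points of projective space. -/
def projLine {K : Type*} [Field K] {V : Type*} [AddCommGroup V] [Module K V]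
    (p q : Projectivization K V) : Set (Projectivization K V) :=
  {z | ∃ a b : K, ∃ h : a • p.rep + b • q.rep ≠ 0,
    z = Projectivization.mk K (a • p.rep + b • q.rep) h}

/-- The center of a subset `Y` of projective space: the points `p ∈ Y` such that every line
spanned by `p` and another point of `Y` is contained in `Y`. -/
def projCenter {K : Type*} [Field K] {V : Type*} [AddCommGroup V] [Module K V]
    (Y : Set (Projectivization K V)) : Set (Projectivization K V) :=
  {p ∈ Y | ∀ x ∈ Y, projLine p x ⊆ Y}

section Aux

variable {K : Type*} [Field K] {V : Type*} [AddCommGroup V] [Module K V]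

private lemma aux_mk_congr (v w : V) (hv : v ≠ 0) (h : v = w) :
    Projectivization.mk K v hv = Projectivization.mk K w (h ▸ hv) := by
  subst h; rfl

private lemma aux_phi_rep_mk (φ : V →ₗ[K] K) (w : V) (hw : w ≠ 0) (hφw : φ w = 0) :
    φ (Projectivization.mk K w hw).rep = 0 := by
  obtain ⟨μ, hμ⟩ := Projectivization.exists_smul_eq_mk_rep K w hw
  rw [← hμ, Units.smul_def, map_smul, hφw, smul_zero]

end Aux

/-- Let `Y ⊆ ℙⁿ` be an irreducible projective variety and `H` a hyperplane with
`cent(Y) ⊄ H`.  Then the center of `Y ∩ H` equals `cent(Y) ∩ H`. -/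
theorem stmt2 (K : Type*) [Field K] (n : ℕ)
    (Y : Set (Projectivization K (Fin (n + 1) → K)))
    (hclosed : @IsClosed _ (projZariski K (Fin (n + 1))) Y)
    (hirr : @IsIrreducible _ (projZariski K (Fin (n + 1))) Y)
    (φ : (Fin (n + 1) → K) →ₗ[K] K) (hφ : φ ≠ 0)
    (H : Set (Projectivization K (Fin (n + 1) → K)))
    (hH : H = {y | φ y.rep = 0})
    (hcent : ¬ projCenter Y ⊆ H) :
    projCenter (Y ∩ H) = projCenter Y ∩ H := by
  subst hH
  obtain ⟨p, hpC, hpH⟩ := Set.not_subset.mp hcent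
  obtain ⟨hpY, hpL⟩ := hpC
  have hc : φ p.rep ≠ 0 := hpH
  ext q
  constructor
  · rintro ⟨⟨hqY, hqH⟩, hq⟩
    refine ⟨⟨hqY, ?_⟩, hqH⟩
    intro x hxY z hz
    obtain ⟨a, b, hab, rfl⟩ := hz
    by_cases hxH : φ x.rep = 0
    · exact (hq x ⟨hxY, hxH⟩ ⟨a, b, hab, rfl⟩).1
    · set c := φ p.rep with hcdef
      set v : Fin (n + 1) → K := (-φ x.rep) • p.rep + c • x.rep with hvdef
      by_cases hv0 : v = 0
      · -- x.rep is a multiple of p.rep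
        have hx : c • x.rep = (φ x.rep) • p.rep := by
          have h0 := hv0
          rw [hvdef] at h0
          linear_combination (norm := module) h0
        have hbx : b • x.rep = (b * φ x.rep / c) • p.rep := by
          calc b • x.rep = (b / c) • (c • x.rep) := by
                rw [smul_smul, div_mul_cancel₀ _ hc]
            _ = (b / c) • (φ x.rep • p.rep) := by rw [hx]
            _ = (b * φ x.rep / c) • p.rep := by rw [smul_smul]; congr 1; ring
        have key : a • q.rep + b • x.rep = (b * φ x.rep / c) • p.rep + a • q.rep := by
          rw [hbx]; exact add_comm _ _
        rw [aux_mk_congr _ _ hab key]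
        exact hpL q hqY ⟨_, _, key ▸ hab, rfl⟩
      · -- x' := mk v lies in Y ∩ H
        have hx'Y : Projectivization.mk K v hv0 ∈ Y :=
          hpL x hxY ⟨-φ x.rep, c, hv0, rfl⟩
        have hφv : φ v = 0 := by
          rw [hvdef]; simp only [map_add, map_smul, smul_eq_mul]; ring
        have hx'H : φ (Projectivization.mk K v hv0).rep = 0 :=
          aux_phi_rep_mk φ v hv0 hφv
        obtain ⟨μ, hμ⟩ := Projectivization.exists_smul_eq_mk_rep K v hv0
        have hμ' : (μ : K) • v = (Projectivization.mk K v hv0).rep := hμ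
        set x' := Projectivization.mk K v hv0 with hx'def
        set w : Fin (n + 1) → K := a • q.rep + (b / c) • v with hwdef
        have hdecomp : a • q.rep + b • x.rep = (b * φ x.rep / c) • p.rep + w := by
          rw [hwdef, hvdef]
          match_scalars <;> field_simp <;> ring
        by_cases hw0 : w = 0
        · have key : a • q.rep + b • x.rep
              = (b * φ x.rep / c) • p.rep + (0 : K) • q.rep := by
            rw [hdecomp, hw0]; module
          rw [aux_mk_congr _ _ hab key]
          exact hpL q hqY ⟨_, _, key ▸ hab, rfl⟩
        · -- mk w ∈ line q x' ⊆ Y ∩ H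
          have hwline : w = a • q.rep + (b / c * (μ : K)⁻¹) • x'.rep := by
            rw [hwdef]
            congr 1
            rw [← hμ', smul_smul]
            congr 1
            field_simp
          have hmkwY : Projectivization.mk K w hw0 ∈ Y ∩ {y | φ y.rep = 0} :=
            hq x' ⟨hx'Y, hx'H⟩ ⟨a, b / c * (μ : K)⁻¹, hwline ▸ hw0,
              aux_mk_congr _ _ hw0 hwline⟩
          obtain ⟨ν, hν⟩ := Projectivization.exists_smul_eq_mk_rep K w hw0
          have hν' : (ν : K) • w = (Projectivization.mk K w hw0).rep := hν
          have key : a • q.rep + b • x.rep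
              = (b * φ x.rep / c) • p.rep
                + ((ν : K)⁻¹) • (Projectivization.mk K w hw0).rep := by
            rw [hdecomp]
            congr 1
            rw [← hν', smul_smul, inv_mul_cancel₀ (Units.ne_zero ν), one_smul]
          rw [aux_mk_congr _ _ hab key]
          exact hpL _ hmkwY.1 ⟨_, _, key ▸ hab, rfl⟩
  · rintro ⟨⟨hqY, hqL⟩, hqH⟩
    refine ⟨⟨hqY, hqH⟩, ?_⟩
    rintro x ⟨hxY, hxH⟩ z hz
    obtain ⟨a, b, hab, rfl⟩ := hz
    refine ⟨hqL x hxY ⟨a, b, hab, rfl⟩, ?_⟩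
    show φ _ = 0
    refine aux_phi_rep_mk φ _ hab ?_
    have hq0 : φ q.rep = 0 := hqH
    have hx0 : φ x.rep = 0 := hxH
    simp [hq0, hx0]
end

section
/- Let C ⊂ P^{2k+2} be a general nondegenerate projectively normal curve of genus g (so of degree d = 2k + g + 2). Then the degree of the secant hypersurface σ_k(C) equals (k+2)·Σ_{i=0}^{k+1} C(g,i) − g·Σ_{i=0}^{k} C(g−1,i). If moreover g ≤ k+1, this equals (2k+4−g)·2^{g−1}. -/
open Finset

lemma aux_mul_choose (g i : ℕ) : (i + 1) * g.choose (i + 1) = g * (g - 1).choose i := by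
  cases g with
  | zero => simp [Nat.choose_eq_zero_of_lt]
  | succ g' =>
    simp only [Nat.succ_sub_one]
    rw [mul_comm]
    exact (Nat.add_one_mul_choose_eq g' i).symm

lemma aux_sum_choose (m n : ℕ) (h : m < n) :
    ∑ i ∈ range n, (m.choose i : ℤ) = 2 ^ m := by
  rw [← Finset.sum_subset (Finset.range_subset_range.2 h) (by
    intro x _ hx
    rw [Finset.mem_range, not_lt] at hx
    rw [Nat.choose_eq_zero_of_lt (by omega), Nat.cast_zero])]
  rw [← Nat.cast_sum, Nat.sum_range_choose]
  push_cast
  ring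

/-- Let `C ⊂ ℙ^{2k+2}` be a general nondegenerate projectively normal curve of
genus `g`, so of degree `d = 2k+g+2`.  By the secant degree formula, the degree of the secant
hypersurface `σ_k(C)` is `∑_{j=0}^{k+1} (−1)^j C(g+2k−d, j) C(g, k+1−j)`, which for
`d = 2k+g+2` equals `∑_{j=0}^{k+1} (j+1)·C(g, k+1−j)` (since `(−1)^j C(−2,j) = j+1`).
This equals `(k+2)·∑_{i=0}^{k+1} C(g,i) − g·∑_{i=0}^{k} C(g−1,i)`, and if moreover
`g ≤ k+1`, this equals `(2k+4−g)·2^{g−1}` (stated multiplied by `2` to stay in `ℤ`). -/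
theorem stmt16 (g k : ℕ) :
    (∑ j ∈ range (k + 2), ((j : ℤ) + 1) * (g.choose (k + 1 - j)) =
      (k + 2) * (∑ i ∈ range (k + 2), (g.choose i : ℤ)) -
        g * (∑ i ∈ range (k + 1), ((g - 1).choose i : ℤ))) ∧
    (g ≤ k + 1 →
      2 * (∑ j ∈ range (k + 2), ((j : ℤ) + 1) * (g.choose (k + 1 - j))) =
        (2 * k + 4 - (g : ℤ)) * 2 ^ g) := by
  have h1 : ∑ j ∈ range (k + 2), ((j : ℤ) + 1) * (g.choose (k + 1 - j)) =
      ∑ i ∈ range (k + 2), (((k + 2 : ℕ) : ℤ) - i) * (g.choose i : ℤ) := by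
    rw [← Finset.sum_range_reflect (fun i => (((k + 2 : ℕ) : ℤ) - i) * (g.choose i : ℤ)) (k + 2)]
    refine Finset.sum_congr rfl fun j hj => ?_
    rw [Finset.mem_range] at hj
    have e1 : k + 2 - 1 - j = k + 1 - j := by omega
    have e2 : ((k + 1 - j : ℕ) : ℤ) = (k : ℤ) + 1 - j := by
      have : (j : ℤ) ≤ (k : ℤ) + 1 := by exact_mod_cast Nat.lt_succ_iff.mp (by omega)
      push_cast [Nat.cast_sub (by omega : j ≤ k + 1)]
      ring
    rw [e1, e2]
    push_cast
    ring
  have hsplit : ∑ i ∈ range (k + 2), (((k + 2 : ℕ) : ℤ) - i) * (g.choose i : ℤ) =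
      (k + 2) * (∑ i ∈ range (k + 2), (g.choose i : ℤ)) -
        ∑ i ∈ range (k + 2), (i : ℤ) * (g.choose i : ℤ) := by
    rw [Finset.mul_sum, ← Finset.sum_sub_distrib]
    refine Finset.sum_congr rfl fun i _ => ?_
    push_cast
    ring
  have hshift : ∑ i ∈ range (k + 2), (i : ℤ) * (g.choose i : ℤ) =
      g * (∑ i ∈ range (k + 1), ((g - 1).choose i : ℤ)) := by
    rw [Finset.sum_range_succ' (fun i => (i : ℤ) * (g.choose i : ℤ)) (k + 1)]
    simp only [Nat.cast_zero, zero_mul, add_zero]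
    rw [Finset.mul_sum]
    refine Finset.sum_congr rfl fun i _ => ?_
    have := aux_mul_choose g i
    push_cast
    exact_mod_cast congrArg (Nat.cast : ℕ → ℤ) this
  have hfirst : ∑ j ∈ range (k + 2), ((j : ℤ) + 1) * (g.choose (k + 1 - j)) =
      (k + 2) * (∑ i ∈ range (k + 2), (g.choose i : ℤ)) -
        g * (∑ i ∈ range (k + 1), ((g - 1).choose i : ℤ)) := by
    rw [h1, hsplit, hshift]
  refine ⟨hfirst, fun hg => ?_⟩
  rw [hfirst]
  have hA : ∑ i ∈ range (k + 2), (g.choose i : ℤ) = 2 ^ g :=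
    aux_sum_choose g (k + 2) (by omega)
  rw [hA]
  cases g with
  | zero => simp; ring
  | succ g' =>
    have hB : ∑ i ∈ range (k + 1), ((g' + 1 - 1).choose i : ℤ) = 2 ^ g' := by
      simp only [Nat.add_sub_cancel]
      exact aux_sum_choose g' (k + 1) (by omega)
    rw [hB]
    push_cast
    ring
end

section
/- Let C be a smooth complete curve of genus 1 and C^{(n)} its n-fold symmetric product, with numerical classes x (of the divisor X_P = {D : D − P ≥ 0}) and θ (of a fiber of the Abel–Jacobi map u : C^{(n)} → Pic^n(C)), satisfying θ² = 0 and x^n = θ x^{n−1}. Then the Euler characteristic of a line bundle ℒ on C^{(n)} numerically equivalent to aθ + bx with b ≥ 0 is χ(ℒ) = C(b+n, n) + (a−1)·C(b+n−1, n−1). -/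
open PowerSeries

/-- The Todd power series `T(x) = x/(1 − e^{−x}) = ∑ Bₘ' xᵐ/m!` (Bernoulli numbers with
`B₁' = 1/2`), with coefficients in the dual numbers `ℚ[θ]/(θ²)`. -/
noncomputable def toddSeries : PowerSeries (DualNumber ℚ) :=
  PowerSeries.mk fun m => algebraMap ℚ (DualNumber ℚ) (bernoulli' m / m.factorial)

/-- The formal derivative `T'(x) = ∑ B'_{m+1} xᵐ/m!` of the Todd series. -/
noncomputable def toddSeries' : PowerSeries (DualNumber ℚ) :=
  PowerSeries.mk fun m => algebraMap ℚ (DualNumber ℚ) (bernoulli' (m + 1) / m.factorial)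

/-- The exponential series `e^{bx}`. -/
noncomputable def expSeries (b : ℕ) : PowerSeries (DualNumber ℚ) :=
  PowerSeries.mk fun m => algebraMap ℚ (DualNumber ℚ) ((b : ℚ) ^ m / m.factorial)

namespace Stmt17Aux

noncomputable def TT : ℚ⟦X⟧ := bernoulli'PowerSeries ℚ
noncomputable def ψ : ℚ⟦X⟧ := rescale (-1 : ℚ) (exp ℚ)
noncomputable def ww : ℚ⟦X⟧ := PowerSeries.mk fun m => (-1:ℚ)^m / (m+1).factorial
noncomputable def FF (c : ℕ) : ℚ⟦X⟧ := rescale (c : ℚ) (exp ℚ)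

lemma coeff_ψ (n : ℕ) : coeff (R := ℚ) n ψ = (-1)^n / n.factorial := by
  simp [ψ, coeff_rescale, coeff_exp]
  ring

lemma Xw : X * ww = 1 - ψ := by
  ext n
  cases n with
  | zero =>
    have h0 : coeff (R := ℚ) 0 ψ = 1 := by rw [coeff_ψ]; norm_num
    simp [map_sub, h0]
  | succ k =>
    rw [coeff_succ_X_mul]
    simp [ww, coeff_ψ, coeff_one, Nat.factorial_succ, pow_succ]
    ring

lemma expψ : exp ℚ * ψ = 1 := by
  have := exp_mul_exp_eq_exp_add (1 : ℚ) (-1)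
  simpa [rescale_one, rescale_zero, constantCoeff_exp, ψ] using this

lemma Tw : TT * ww = 1 := by
  have h := bernoulli'PowerSeries_mul_exp_sub_one ℚ
  have h2 : TT * ((exp ℚ - 1) * ψ) = X * (exp ℚ * ψ) := by
    rw [← mul_assoc, TT, h]; ring
  rw [expψ, mul_one] at h2
  have h3 : (exp ℚ - 1) * ψ = X * ww := by
    rw [Xw, sub_mul, expψ, one_mul]
  rw [h3] at h2
  have : X * (TT * ww) = X * 1 := by rw [mul_one]; linear_combination h2
  exact mul_left_cancel₀ X_ne_zero this


lemma ψ_deriv : d⁄dX ℚ ψ = -ψ := by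
  ext n
  rw [coeff_derivative, coeff_ψ, map_neg, coeff_ψ]
  rw [Nat.factorial_succ, pow_succ]
  push_cast
  have h1 : (n.factorial : ℚ) ≠ 0 := by exact_mod_cast n.factorial_ne_zero
  have h2 : ((n:ℚ) + 1) ≠ 0 := by positivity
  field_simp

lemma Xw' : X * d⁄dX ℚ ww = 1 - ww - X * ww := by
  have h : d⁄dX ℚ (X * ww) = ψ := by
    rw [Xw, map_sub, Derivation.map_one_eq_zero, ψ_deriv]; ring
  rw [Derivation.leibniz, derivative_X] at h
  simp only [smul_eq_mul, mul_one] at h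
  have hψ : ψ = 1 - X * ww := by rw [Xw]; ring
  rw [hψ] at h
  linear_combination h


lemma T_deriv : d⁄dX ℚ TT = -(TT^2) * d⁄dX ℚ ww := by
  have h : d⁄dX ℚ (TT * ww) = 0 := by rw [Tw, Derivation.map_one_eq_zero]
  rw [Derivation.leibniz] at h
  simp only [smul_eq_mul] at h
  -- h : TT * d⁄dX ww + ww * d⁄dX TT = 0
  have h2 : TT * (TT * d⁄dX ℚ ww + ww * d⁄dX ℚ TT) = 0 := by rw [h, mul_zero]
  have h3 : (TT * ww) * d⁄dX ℚ TT = - (TT^2 * d⁄dX ℚ ww) := by linear_combination h2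
  rw [Tw, one_mul] at h3
  linear_combination h3

lemma wT (k : ℕ) : ww * TT^(k+1) = TT^k := by
  have : ww * TT^(k+1) = (TT * ww) * TT^k := by ring
  rw [this, Tw, one_mul]

lemma dstep (k : ℕ) : coeff (R := ℚ) (k+1) (TT^(k+2)) = coeff (R := ℚ) k (TT^(k+1)) := by
  set c : ℚ⟦X⟧ := C (R := ℚ) ((k:ℚ)+1) with hc_def
  have hcast : ((k+1 : ℕ) : ℚ⟦X⟧) = c := by
    rw [hc_def, ← map_natCast (C (R := ℚ)) (k+1)]; push_cast; ring_nf
  have hD : d⁄dX ℚ (TT^(k+1)) = -(c * (TT^(k+2) * d⁄dX ℚ ww)) := by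
    rw [Derivation.leibniz_pow, T_deriv, nsmul_eq_mul, hcast]
    simp only [Nat.add_sub_cancel, smul_eq_mul]
    ring
  have hX : X * d⁄dX ℚ (TT^(k+1)) =
      -(c * (TT^(k+2) - TT^(k+1) - X * TT^(k+1))) := by
    rw [hD]
    have hw' := Xw'
    have hwT := wT (k+1)
    calc X * -(c * (TT^(k+2) * d⁄dX ℚ ww))
        = -(c * (TT^(k+2) * (X * d⁄dX ℚ ww))) := by ring
      _ = -(c * (TT^(k+2) * (1 - ww - X * ww))) := by rw [hw']
      _ = -(c * (TT^(k+2) - ww * TT^(k+2) - X * (ww * TT^(k+2)))) := by ring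
      _ = -(c * (TT^(k+2) - TT^(k+1) - X * TT^(k+1))) := by rw [hwT]
  have hc := congrArg (coeff (R := ℚ) (k+1)) hX
  rw [coeff_succ_X_mul, coeff_derivative, map_neg, coeff_C_mul, map_sub, map_sub,
    coeff_succ_X_mul] at hc
  have hk : ((k:ℚ)+1) ≠ 0 := by positivity
  have h2 : ((k:ℚ)+1) * (coeff (R := ℚ) (k+1) (TT^(k+2)) - coeff (R := ℚ) k (TT^(k+1))) = 0 := by
    linear_combination hc
  rcases mul_eq_zero.mp h2 with h|h
  · exact absurd h hk
  · linarith

lemma dlem (n : ℕ) : coeff (R := ℚ) n (TT^(n+1)) = 1 := by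
  induction n with
  | zero =>
    rw [pow_one]
    simp [TT, bernoulli'PowerSeries, coeff_mk]
  | succ k ih => rw [dstep]; exact ih


lemma constCoeff_FF (c : ℕ) : constantCoeff (R := ℚ) (FF c) = 1 := by
  have : coeff (R := ℚ) 0 (FF c) = 1 := by
    rw [FF, coeff_rescale, coeff_exp]; norm_num
  simpa using this

lemma FF_zero : FF 0 = 1 := by
  rw [FF]
  push_cast
  rw [rescale_zero]
  simp [constantCoeff_exp]

lemma FF_succ_ψ (c : ℕ) : FF (c+1) * ψ = FF c := by
  have h := exp_mul_exp_eq_exp_add ((c:ℚ)+1) (-1)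
  have : ((c:ℚ)+1) + (-1) = (c:ℚ) := by ring
  rw [this] at h
  rw [FF, FF, ψ]
  push_cast
  exact h

lemma LA : ∀ c n : ℕ, coeff (R := ℚ) n (FF c * TT^(n+1)) = ((c+n).choose n : ℚ) := by
  intro c
  induction c with
  | zero =>
    intro n
    rw [FF_zero, one_mul, dlem]
    simp
  | succ c ihc =>
    intro n
    induction n with
    | zero =>
      have : coeff (R := ℚ) 0 (FF (c+1) * TT^1) = constantCoeff (R := ℚ) (FF (c+1)) * constantCoeff (R := ℚ) (TT^1) := by
        simp [coeff_zero_eq_constantCoeff, map_mul]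
      rw [this, constCoeff_FF, pow_one]
      have hT0 : constantCoeff (R := ℚ) TT = 1 := by
        have : coeff (R := ℚ) 0 TT = 1 := by simp [TT, bernoulli'PowerSeries, coeff_mk]
        simpa using this
      rw [hT0]
      simp
    | succ k ihn =>
      have hsplit : FF (c+1) * TT^(k+2) =
          FF c * TT^(k+2) + X * (FF (c+1) * TT^(k+1)) := by
        have h1 : FF (c+1) = FF c + FF (c+1) * (1 - ψ) := by
          rw [mul_sub, FF_succ_ψ, mul_one]; ring
        have h2 : (1 - ψ) = X * ww := (Xw).symm
        calc FF (c+1) * TT^(k+2) = (FF c + FF (c+1) * (X * ww)) * TT^(k+2) := by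
              rw [← h2, ← h1]
          _ = FF c * TT^(k+2) + X * (FF (c+1) * (ww * TT^(k+2))) := by ring
          _ = FF c * TT^(k+2) + X * (FF (c+1) * TT^(k+1)) := by rw [wT (k+1)]
      rw [hsplit, map_add, coeff_succ_X_mul, ihc (k+1), ihn]
      have hch : (c + 1 + (k+1)).choose (k+1) = (c + (k+1)).choose (k+1) + (c + 1 + k).choose k := by
        have e1 : c + 1 + (k+1) = (c+k+1) + 1 := by omega
        have e2 : c + (k+1) = c+k+1 := by omega
        have e3 : c + 1 + k = c+k+1 := by omega
        rw [e1, e2, e3, Nat.choose_succ_succ]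
        exact Nat.add_comm _ _
      rw [hch]
      push_cast
      ring


lemma FFd (b : ℕ) : d⁄dX ℚ (FF b) = C (R := ℚ) (b:ℚ) * FF b := by
  ext n
  rw [coeff_derivative, coeff_C_mul, FF, coeff_rescale, coeff_rescale, coeff_exp, coeff_exp]
  have h1 : ((n.factorial : ℚ)) ≠ 0 := by exact_mod_cast n.factorial_ne_zero
  have h2 : ((n:ℚ) + 1) ≠ 0 := by positivity
  rw [Nat.factorial_succ]
  push_cast
  field_simp
  ring

lemma mainQ (k b : ℕ) (a : ℚ) :
    coeff (R := ℚ) (k+1) (FF b * TT^(k+1)) + a * coeff (R := ℚ) k (FF b * TT^(k+1))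
      - coeff (R := ℚ) k (FF b * TT^k * d⁄dX ℚ TT)
    = ((b+k+1).choose (k+1) : ℚ) + (a-1) * ((b+k).choose k : ℚ) := by
  have hcast : ((k+1 : ℕ) : ℚ⟦X⟧) = C (R := ℚ) ((k:ℚ)+1) := by
    rw [← map_natCast (C (R := ℚ)) (k+1)]; push_cast; ring_nf
  have hD1 : FF b * d⁄dX ℚ (TT^(k+1)) = C (R := ℚ) ((k:ℚ)+1) * (FF b * TT^k * d⁄dX ℚ TT) := by
    rw [Derivation.leibniz_pow]
    simp only [Nat.add_sub_cancel, nsmul_eq_mul, smul_eq_mul]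
    rw [hcast]; ring
  have hL : d⁄dX ℚ (FF b * TT^(k+1)) =
      C (R := ℚ) ((k:ℚ)+1) * (FF b * TT^k * d⁄dX ℚ TT) + C (R := ℚ) (b:ℚ) * (FF b * TT^(k+1)) := by
    rw [Derivation.leibniz]
    simp only [smul_eq_mul]
    rw [FFd, ← hD1]; ring
  have hcoeff := congrArg (coeff (R := ℚ) k) hL
  rw [coeff_derivative, map_add, coeff_C_mul, coeff_C_mul, LA b k] at hcoeff
  have hnat : ((k:ℚ)+1) * ((b+k+1).choose (k+1) : ℚ) = ((b:ℚ)+k+1) * ((b+k).choose k : ℚ) := by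
    have h : (b+k+1) * ((b+k).choose k) = ((b+k+1).choose (k+1)) * (k+1) :=
      Nat.add_one_mul_choose_eq (b+k) k
    have h' : ((b:ℚ)+k+1) * ((b+k).choose k : ℚ) = ((b+k+1).choose (k+1) : ℚ) * ((k:ℚ)+1) := by
      exact_mod_cast h
    linear_combination -h'
  have hk : ((k:ℚ)+1) ≠ 0 := by positivity
  rw [LA b k]
  apply mul_left_cancel₀ hk
  linear_combination hcoeff - hnat


noncomputable def ι : ℚ⟦X⟧ →+* (DualNumber ℚ)⟦X⟧ :=
  PowerSeries.map (algebraMap ℚ (DualNumber ℚ))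

lemma coeff_ι (m : ℕ) (g : ℚ⟦X⟧) :
    coeff (R := DualNumber ℚ) m (ι g) = TrivSqZeroExt.inl (coeff (R := ℚ) m g) := by
  rw [ι, coeff_map]
  rfl

lemma todd_eq : toddSeries = ι TT := by
  refine PowerSeries.ext fun m => ?_
  rw [coeff_ι, toddSeries, coeff_mk, TT, bernoulli'PowerSeries, coeff_mk]
  rfl

lemma todd'_eq : toddSeries' = ι (d⁄dX ℚ TT) := by
  refine PowerSeries.ext fun m => ?_
  rw [coeff_ι, coeff_derivative]
  have h1 : ((m.factorial : ℚ)) ≠ 0 := by exact_mod_cast m.factorial_ne_zero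
  have h2 : ((m:ℚ) + 1) ≠ 0 := by positivity
  have h3 : coeff (R := ℚ) (m+1) TT * ((m:ℚ)+1) = bernoulli' (m+1) / m.factorial := by
    rw [TT, bernoulli'PowerSeries, coeff_mk]
    have : algebraMap ℚ ℚ (bernoulli' (m+1) / (m+1).factorial)
        = bernoulli' (m+1) / (m+1).factorial := by simp
    rw [this, Nat.factorial_succ]
    push_cast
    field_simp
  rw [h3, toddSeries', coeff_mk]
  rfl

lemma exp_eq (b : ℕ) : expSeries b = ι (FF b) := by
  refine PowerSeries.ext fun m => ?_
  rw [coeff_ι, expSeries, coeff_mk, FF, coeff_rescale, coeff_exp]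
  have : ((b:ℚ))^m * ((algebraMap ℚ ℚ) (1 / m.factorial)) = (b:ℚ)^m / m.factorial := by
    simp; ring
  rw [this]
  rfl

end Stmt17Aux

open Stmt17Aux

/-- Let `C` be a smooth complete curve of genus 1 and `C^{(n)}` its `n`-fold
symmetric product, whose ring of cycles modulo numerical equivalence is
`ℚ[θ,x]/(θ², xⁿ − θxⁿ⁻¹)`.  By Hirzebruch–Riemann–Roch, the Euler characteristic of a line
bundle `ℒ` numerically equivalent to `aθ + bx` (with `b ≥ 0`) is the degree-`n` part of
`(1 + aθ)·e^{bx}·(x/(1−e^{−x}))^{n−1}·((x−θ)/(1−e^{θ−x}))`.  Working in power series over the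
dual numbers `ℚ[θ]/(θ²)` (so that `(x−θ)/(1−e^{θ−x}) = T(x) − θT'(x)`), and reading off the
degree-`n` part via the relation `xⁿ = θxⁿ⁻¹` (i.e. the `θ⁰`-coefficient of `xⁿ` plus the
`θ`-coefficient of `xⁿ⁻¹`), this equals `χ(ℒ) = C(b+n, n) + (a−1)·C(b+n−1, n−1)`. -/
theorem stmt17 (n : ℕ) (hn : 1 ≤ n) (a : ℤ) (b : ℕ) :
    (TrivSqZeroExt.fst (PowerSeries.coeff (R := DualNumber ℚ) n
        ((PowerSeries.C (R := DualNumber ℚ) (1 + (a : ℚ) • DualNumber.eps)) *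
          expSeries b * toddSeries ^ (n - 1) *
          (toddSeries - PowerSeries.C (R := DualNumber ℚ) DualNumber.eps * toddSeries'))) +
      TrivSqZeroExt.snd (PowerSeries.coeff (R := DualNumber ℚ) (n - 1)
        ((PowerSeries.C (R := DualNumber ℚ) (1 + (a : ℚ) • DualNumber.eps)) *
          expSeries b * toddSeries ^ (n - 1) *
          (toddSeries - PowerSeries.C (R := DualNumber ℚ) DualNumber.eps * toddSeries')))) =
    ((b + n).choose n : ℚ) + ((a : ℚ) - 1) * ((b + n - 1).choose (n - 1)) := by
  obtain ⟨k, rfl⟩ : ∃ k, n = k + 1 := ⟨n - 1, (Nat.succ_pred_eq_of_pos hn).symm⟩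
  simp only [Nat.add_sub_cancel]
  have hb2 : b + (k + 1) - 1 = b + k := by omega
  rw [hb2]
  set r : DualNumber ℚ := 1 + (a : ℚ) • DualNumber.eps with hr
  set G1 : ℚ⟦X⟧ := FF b * TT^(k+1) with hG1
  set G2 : ℚ⟦X⟧ := FF b * TT^k * d⁄dX ℚ TT with hG2
  have hP : expSeries b * toddSeries ^ k *
      (toddSeries - PowerSeries.C (R := DualNumber ℚ) DualNumber.eps * toddSeries') =
      ι G1 - PowerSeries.C (R := DualNumber ℚ) DualNumber.eps * ι G2 := by
    rw [exp_eq, todd_eq, todd'_eq]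
    have e1 : ι G1 = ι (FF b) * ι TT ^ k * ι TT := by
      rw [← map_pow, ← map_mul, ← map_mul]
      exact congrArg ι (by rw [hG1]; ring)
    have e2 : ι G2 = ι (FF b) * ι TT ^ k * ι (d⁄dX ℚ TT) := by
      rw [← map_pow, ← map_mul, ← map_mul, hG2]
    rw [e1, e2]
    ring
  have key : ∀ m : ℕ, PowerSeries.coeff (R := DualNumber ℚ) m
      ((PowerSeries.C (R := DualNumber ℚ) r) * expSeries b * toddSeries ^ k *
        (toddSeries - PowerSeries.C (R := DualNumber ℚ) DualNumber.eps * toddSeries')) =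
      r * (TrivSqZeroExt.inl (coeff (R := ℚ) m G1)
           - DualNumber.eps * TrivSqZeroExt.inl (coeff (R := ℚ) m G2)) := by
    intro m
    have : (PowerSeries.C (R := DualNumber ℚ) r) * expSeries b * toddSeries ^ k *
        (toddSeries - PowerSeries.C (R := DualNumber ℚ) DualNumber.eps * toddSeries') =
        (PowerSeries.C (R := DualNumber ℚ) r) *
          (ι G1 - PowerSeries.C (R := DualNumber ℚ) DualNumber.eps * ι G2) := by
      rw [← hP]; ring
    rw [this, coeff_C_mul, map_sub, coeff_C_mul, coeff_ι, coeff_ι]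
  rw [key, key]
  have hfst : ∀ u v : ℚ, TrivSqZeroExt.fst (r * (TrivSqZeroExt.inl u
      - DualNumber.eps * TrivSqZeroExt.inl v)) = u := by
    intro u v
    simp [hr, TrivSqZeroExt.fst_mul, TrivSqZeroExt.fst_inl]
  have hsnd : ∀ u v : ℚ, TrivSqZeroExt.snd (r * (TrivSqZeroExt.inl u
      - DualNumber.eps * TrivSqZeroExt.inl v)) = (a:ℚ) * u - v := by
    intro u v
    simp [hr, DualNumber.snd_mul, TrivSqZeroExt.fst_mul, TrivSqZeroExt.fst_inl,
      TrivSqZeroExt.snd_inl, TrivSqZeroExt.snd_mul]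
    ring
  rw [hfst, hsnd]
  have hmain := mainQ k b (a:ℚ)
  have hG1' : FF b * TT^k * TT = G1 := by rw [hG1, pow_succ]; ring
  have hb1 : b + (k+1) = b + k + 1 := by omega
  rw [hb1]
  linear_combination hmain
end
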